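/- Let S and T be finite samples (empirical distributions) over X × Y, let H ⊆ Y^X, and for h ∈ H let C_h denote either HΔH or hΔH. Then for all h ∈ H: |R_S(h) − R_T(h)| ≤ λ̃ + d_{C_h}(S_X, T_X), where λ̃ = min_{η∈H}(R_S(η) + R_T(η)), R_D(h) is empirical 0-1 risk under D, and d_C is the C-divergence between the X-marginals, assuming the minimum defining λ̃ and the suprema defining the divergence are attained. -/

import Mathlib

lemma card_filter_real {α : Type*} (p : α → Prop) [DecidablePred p] (M : Multiset α) :
    ((M.filter p).card : ℝ) = (M.map (fun a => if p a then (1:ℝ) else 0)).sum := by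
  induction M using Multiset.induction_on with
  | empty => simp
  | cons a s ih => by_cases h : p a <;> simp [Multiset.filter_cons, h, ih, add_comm]

lemma sum_map_le' {α : Type*} (M : Multiset α) (f g : α → ℝ) (h : ∀ a ∈ M, f a ≤ g a) :
    (M.map f).sum ≤ (M.map g).sum :=
  Multiset.sum_map_le_sum_map f g h

-- triangle counts
lemma triA {X Y : Type*} [DecidableEq Y] (M : Multiset (X × Y)) (h η : X → Y) :
    ((M.filter (fun pr => h pr.1 ≠ pr.2)).card : ℝ) ≤
      ((M.filter (fun pr => η pr.1 ≠ pr.2)).card : ℝ) +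
      (M.map (fun pr => if h pr.1 ≠ η pr.1 then (1:ℝ) else 0)).sum := by
  rw [card_filter_real, card_filter_real, ← Multiset.sum_map_add]
  apply sum_map_le'
  intro a _
  by_cases h1 : h a.1 = a.2 <;> by_cases h2 : η a.1 = a.2 <;>
    simp [h1, h2] <;> by_cases h3 : h a.1 = η a.1 <;> simp_all <;> norm_num

lemma triB {X Y : Type*} [DecidableEq Y] (M : Multiset (X × Y)) (h η : X → Y) :
    (M.map (fun pr => if h pr.1 ≠ η pr.1 then (1:ℝ) else 0)).sum ≤
      ((M.filter (fun pr => h pr.1 ≠ pr.2)).card : ℝ) +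
      ((M.filter (fun pr => η pr.1 ≠ pr.2)).card : ℝ) := by
  rw [card_filter_real, card_filter_real, ← Multiset.sum_map_add]
  apply sum_map_le'
  intro a _
  by_cases h1 : h a.1 = a.2 <;> by_cases h2 : η a.1 = a.2 <;>
    simp [h1, h2] <;> by_cases h3 : h a.1 = η a.1 <;> simp_all <;> norm_num


-- division versions
lemma divtriA {X Y : Type*} [DecidableEq Y] (M : Multiset (X × Y)) (h η : X → Y) :
    ((M.filter (fun pr => h pr.1 ≠ pr.2)).card : ℝ) / M.card ≤
      ((M.filter (fun pr => η pr.1 ≠ pr.2)).card : ℝ) / M.card +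
      ((M.map Prod.fst).map (fun x => if h x ≠ η x then (1:ℝ) else 0)).sum / (M.map Prod.fst).card := by
  rcases eq_or_ne M 0 with rfl | hM
  · simp
  · have hc : (0:ℝ) < M.card := by exact_mod_cast Multiset.card_pos.mpr hM
    rw [Multiset.card_map, Multiset.map_map, ← add_div, div_le_div_iff_of_pos_right hc]
    simpa using triA M h η

lemma divtriB {X Y : Type*} [DecidableEq Y] (M : Multiset (X × Y)) (h η : X → Y) :
    ((M.map Prod.fst).map (fun x => if h x ≠ η x then (1:ℝ) else 0)).sum / (M.map Prod.fst).card ≤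
      ((M.filter (fun pr => h pr.1 ≠ pr.2)).card : ℝ) / M.card +
      ((M.filter (fun pr => η pr.1 ≠ pr.2)).card : ℝ) / M.card := by
  rcases eq_or_ne M 0 with rfl | hM
  · simp
  · have hc : (0:ℝ) < M.card := by exact_mod_cast Multiset.card_pos.mpr hM
    rw [Multiset.card_map, Multiset.map_map, ← add_div, div_le_div_iff_of_pos_right hc]
    simpa using triB M h η

-- bound on E values for [0,1]-valued φ
lemma Ebound {X : Type*} (M : Multiset X) (φ : X → ℝ) (h0 : ∀ x, 0 ≤ φ x) (h1 : ∀ x, φ x ≤ 1) :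
    0 ≤ (M.map φ).sum / M.card ∧ (M.map φ).sum / M.card ≤ 1 := by
  rcases eq_or_ne M 0 with rfl | hM
  · simp
  · have hc : (0:ℝ) < M.card := by exact_mod_cast Multiset.card_pos.mpr hM
    constructor
    · apply div_nonneg _ hc.le
      apply Multiset.sum_nonneg
      intro a ha
      obtain ⟨x, _, rfl⟩ := Multiset.mem_map.mp ha
      exact h0 x
    · rw [div_le_one hc]
      calc (M.map φ).sum ≤ (M.map (fun _ => (1:ℝ))).sum :=
            sum_map_le' M φ _ (fun a _ => h1 a)
        _ = M.card := by simp


/-- Per-hypothesis error-gap bound on finite samples: for all `h ∈ H`,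
`|R_S(h) − R_T(h)| ≤ λ̃ + d_{C_h}(S_X, T_X)`, where `C_h` is either `HΔH` or `hΔH`,
`λ̃ = min_{η∈H}(R_S(η) + R_T(η))`, assuming the minimum defining `λ̃` and the
suprema defining the divergences are attained. -/
theorem error_gap_le_adaptability_add_div {X Y : Type*} [DecidableEq Y]
    (S T : Multiset (X × Y)) (hS : S ≠ 0) (hT : T ≠ 0) (H : Set (X → Y)) :
    let R := fun (M : Multiset (X × Y)) (f : X → Y) =>
      ((M.filter (fun pr => f pr.1 ≠ pr.2)).card : ℝ) / M.card
    let E := fun (M : Multiset X) (φ : X → ℝ) => (M.map φ).sum / M.card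
    let ind := fun (p q : X → Y) (x : X) => if p x ≠ q x then (1 : ℝ) else 0
    let dHH := sSup {v : ℝ | ∃ p ∈ H, ∃ q ∈ H,
      v = |E (S.map Prod.fst) (ind p q) - E (T.map Prod.fst) (ind p q)|}
    let dh := fun (h : X → Y) => sSup {v : ℝ | ∃ h' ∈ H,
      v = |E (S.map Prod.fst) (ind h h') - E (T.map Prod.fst) (ind h h')|}
    let lam := sInf {v : ℝ | ∃ η ∈ H, v = R S η + R T η}
    (∃ η ∈ H, R S η + R T η = lam) →
    (∃ p ∈ H, ∃ q ∈ H,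
      |E (S.map Prod.fst) (ind p q) - E (T.map Prod.fst) (ind p q)| = dHH) →
    (∀ h ∈ H, ∃ h' ∈ H,
      |E (S.map Prod.fst) (ind h h') - E (T.map Prod.fst) (ind h h')| = dh h) →
    ∀ h ∈ H, |R S h - R T h| ≤ lam + dHH ∧ |R S h - R T h| ≤ lam + dh h := by
  intro R E ind dHH dh lam hlam hdHH hdh h hH
  obtain ⟨η, hηH, hηeq⟩ := hlam
  -- E values of ind are in [0,1]
  have hEb : ∀ (M : Multiset X) (p q : X → Y),
      0 ≤ E M (ind p q) ∧ E M (ind p q) ≤ 1 := by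
    intro M p q
    apply Ebound
    · intro x; simp only [ind]; split <;> norm_num
    · intro x; simp only [ind]; split <;> norm_num
  have hkey : |R S h - R T h| ≤
      lam + |E (S.map Prod.fst) (ind h η) - E (T.map Prod.fst) (ind h η)| := by
    have hA := divtriA S h η
    have hB := divtriB T h η
    have hA' := divtriA T h η
    have hB' := divtriB S h η
    simp only [R, E, ind] at *
    rw [← hηeq, abs_sub_le_iff]
    constructor
    · have h1 := le_abs_self (((S.map Prod.fst).map
        (fun x => if h x ≠ η x then (1:ℝ) else 0)).sum / ((S.map Prod.fst).card : ℝ) -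
        ((T.map Prod.fst).map (fun x => if h x ≠ η x then (1:ℝ) else 0)).sum /
        ((T.map Prod.fst).card : ℝ))
      linarith
    · have h2 := neg_abs_le (((S.map Prod.fst).map
        (fun x => if h x ≠ η x then (1:ℝ) else 0)).sum / ((S.map Prod.fst).card : ℝ) -
        ((T.map Prod.fst).map (fun x => if h x ≠ η x then (1:ℝ) else 0)).sum /
        ((T.map Prod.fst).card : ℝ))
      linarith
  have hbdd2 : ∀ (p q : X → Y),
      |E (S.map Prod.fst) (ind p q) - E (T.map Prod.fst) (ind p q)| ≤ 2 := by
    intro p q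
    have h1 := hEb (S.map Prod.fst) p q
    have h2 := hEb (T.map Prod.fst) p q
    rw [abs_sub_le_iff]; constructor <;> linarith [h1.1, h1.2, h2.1, h2.2]
  have hDHH : |E (S.map Prod.fst) (ind h η) - E (T.map Prod.fst) (ind h η)| ≤ dHH := by
    apply le_csSup
    · refine ⟨2, ?_⟩
      rintro v ⟨p, hp, q, hq, rfl⟩
      exact hbdd2 p q
    · exact ⟨h, hH, η, hηH, rfl⟩
  have hDh : |E (S.map Prod.fst) (ind h η) - E (T.map Prod.fst) (ind h η)| ≤ dh h := by
    apply le_csSup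
    · refine ⟨2, ?_⟩
      rintro v ⟨h', hh', rfl⟩
      exact hbdd2 h h'
    · exact ⟨η, hηH, rfl⟩
  exact ⟨by linarith, by linarith⟩
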